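/- For the n-dimensional Moler matrix A and the vector x = (1, 1/2, ..., 1/2^{n-1})^T, the Rayleigh quotient satisfies (x^T A x)/(x^T x) = 3n/(4^n - 1). -/

import Mathlib

open Matrix Finset

noncomputable def molerMat (n : ℕ) : Matrix (Fin n) (Fin n) ℝ :=
  fun i j => if i = j then ((i : ℕ) + 1 : ℝ) else (((min (i : ℕ) (j : ℕ) : ℝ) + 1) - 2)

noncomputable def molerF (i j : ℕ) : ℝ :=
  (if i = j then (i + 1 : ℝ) else (min (i:ℝ) (j:ℝ) + 1 - 2)) * ((1/2)^i * (1/2)^j)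

lemma molerF_symm (i j : ℕ) : molerF i j = molerF j i := by
  unfold molerF
  rcases eq_or_ne i j with h | h
  · subst h; ring
  · rw [if_neg h, if_neg (Ne.symm h), min_comm]; ring

lemma Tsum (n : ℕ) : ∑ j ∈ range n, ((j:ℝ) - 1) * (1/2)^j = -2*n*(1/2:ℝ)^n := by
  induction n with
  | zero => simp
  | succ n ih => rw [sum_range_succ, ih]; push_cast; ring

lemma cross (n : ℕ) : ∑ j ∈ range n, molerF n j = -2*n*((1/4:ℝ))^n := by
  have h : ∑ j ∈ range n, molerF n j = ∑ j ∈ range n, ((j:ℝ) - 1) * (1/2)^j * (1/2)^n := by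
    refine sum_congr rfl fun j hj => ?_
    have hjn : j < n := mem_range.mp hj
    unfold molerF
    rw [if_neg (Nat.ne_of_gt hjn), min_eq_right (by exact_mod_cast hjn.le)]
    ring
  rw [h, ← sum_mul, Tsum]
  have : ((1/4:ℝ))^n = (1/2:ℝ)^n * (1/2:ℝ)^n := by
    rw [← mul_pow]; norm_num
  rw [this]; ring

lemma Ssum (n : ℕ) : ∑ i ∈ range n, ∑ j ∈ range n, molerF i j = 4*n*((1/4:ℝ))^n := by
  induction n with
  | zero => simp
  | succ n ih =>
    rw [sum_range_succ]
    have h1 : ∀ i, ∑ j ∈ range (n+1), molerF i j = ∑ j ∈ range n, molerF i j + molerF i n :=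
      fun i => sum_range_succ _ _
    simp only [h1, sum_add_distrib, ih]
    have h2 : ∑ i ∈ range n, molerF i n = ∑ i ∈ range n, molerF n i :=
      sum_congr rfl fun i _ => molerF_symm i n
    rw [h2, cross]
    have h3 : molerF n n = ((n:ℝ)+1) * (1/4)^n := by
      unfold molerF
      rw [if_pos rfl]
      have : ((1/4:ℝ))^n = (1/2:ℝ)^n * (1/2:ℝ)^n := by rw [← mul_pow]; norm_num
      rw [this]
    rw [h3]
    push_cast
    ring

lemma Gsum (n : ℕ) : ∑ i ∈ range n, ((1/2:ℝ)^i * (1/2)^i) = (4 - 4*((1/4:ℝ))^n)/3 := by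
  induction n with
  | zero => simp
  | succ n ih =>
    rw [sum_range_succ, ih]
    have : ((1/4:ℝ))^n = (1/2:ℝ)^n * (1/2:ℝ)^n := by rw [← mul_pow]; norm_num
    rw [pow_succ, this]
    ring

theorem moler_rayleigh (n : ℕ) (hn : 1 ≤ n) :
    ((fun i : Fin n => (1 / 2 : ℝ) ^ (i : ℕ)) ⬝ᵥ
        (molerMat n).mulVec (fun i : Fin n => (1 / 2 : ℝ) ^ (i : ℕ))) /
      ((fun i : Fin n => (1 / 2 : ℝ) ^ (i : ℕ)) ⬝ᵥ (fun i : Fin n => (1 / 2 : ℝ) ^ (i : ℕ))) =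
      3 * n / (4 ^ n - 1) := by
  have hnum : ((fun i : Fin n => (1 / 2 : ℝ) ^ (i : ℕ)) ⬝ᵥ
        (molerMat n).mulVec (fun i : Fin n => (1 / 2 : ℝ) ^ (i : ℕ)))
      = ∑ i ∈ range n, ∑ j ∈ range n, molerF i j := by
    have e1 : ∀ (g : ℕ → ℝ), ∑ i ∈ range n, g i = ∑ i : Fin n, g i :=
      fun g => (Fin.sum_univ_eq_sum_range g n).symm
    rw [e1]
    simp only [dotProduct, mulVec]
    refine sum_congr rfl fun i _ => ?_
    rw [e1, mul_sum]
    refine sum_congr rfl fun j _ => ?_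
    unfold molerMat molerF
    rcases eq_or_ne i j with h | h
    · subst h; rw [if_pos rfl, if_pos rfl]; ring
    · rw [if_neg h, if_neg (by simpa [Fin.ext_iff] using h)]
      ring
  have hden : ((fun i : Fin n => (1 / 2 : ℝ) ^ (i : ℕ)) ⬝ᵥ (fun i : Fin n => (1 / 2 : ℝ) ^ (i : ℕ)))
      = ∑ i ∈ range n, ((1/2:ℝ)^i * (1/2)^i) := by
    simp only [dotProduct]
    exact Fin.sum_univ_eq_sum_range (fun i => (1/2:ℝ)^i * (1/2)^i) n
  rw [hnum, hden, Ssum, Gsum]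
  have h4 : ((1/4:ℝ))^n = ((4:ℝ)^n)⁻¹ := by
    rw [one_div, inv_pow]
  have ha : (4:ℝ)^n ≠ 0 := by positivity
  have hb : (4:ℝ)^n - 1 ≠ 0 := by
    have : (1:ℝ) < 4^n := one_lt_pow₀ (by norm_num) (by omega)
    linarith
  rw [h4]
  have hlt : ((4:ℝ)^n)⁻¹ < 1 := by
    rw [inv_lt_one_iff₀]
    right
    exact one_lt_pow₀ (by norm_num) (by omega)
  have h1 : (4 - 4*((4:ℝ)^n)⁻¹)/3 ≠ 0 := by
    have : (0:ℝ) < 4 - 4*((4:ℝ)^n)⁻¹ := by linarith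
    positivity
  rw [div_eq_div_iff h1 hb]
  field_simp
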